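/- arXiv:0705.0318 — 3 statements merged into one kernel-verified Lean document; each statement's English description precedes it below -/
import Mathlib

section
/- For all natural numbers n and m, the integral over ℝ of h_n(t)·h_m(t) dt equals 1 if n = m and 0 otherwise, where h_n(t) = (2^n n! √π)^{-1/2} H_n(t) e^{-t²/2} and H_n is the n-th (physicists') Hermite polynomial. -/
open Real MeasureTheory Finset

/-- The physicists' Hermite polynomial `H_n(t) = (-1)^n e^{t^2} (d/dt)^n e^{-t^2}`. -/
noncomputable def hermiteH (n : ℕ) (t : ℝ) : ℝ :=
  (-1 : ℝ) ^ n * Real.exp (t ^ 2) * iteratedDeriv n (fun s => Real.exp (-s ^ 2)) t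

/-- The `L^2`-normalized Hermite function `h_n(t) = (2^n n! √π)^{-1/2} H_n(t) e^{-t^2/2}`. -/
noncomputable def hermiteh (n : ℕ) (t : ℝ) : ℝ :=
  (Real.sqrt (2 ^ n * n.factorial * Real.sqrt Real.pi))⁻¹ * hermiteH n t * Real.exp (-t ^ 2 / 2)

/-- The `d`-dimensional Hermite function `𝓗_α(x) = h_{α₁}(x₁)⋯h_{α_d}(x_d)`. -/
noncomputable def hermiteHd (d : ℕ) (α : Fin d → ℕ) (x : Fin d → ℝ) : ℝ :=
  ∏ j, hermiteh (α j) (x j)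

open Polynomial

/-- Physicists' Hermite polynomials. -/
noncomputable def HP : ℕ → Polynomial ℝ
  | 0 => 1
  | n + 1 => C 2 * X * HP n - derivative (HP n)

lemma HP_natDegree_le (n : ℕ) : (HP n).natDegree ≤ n := by
  induction n with
  | zero => simp [HP]
  | succ n ih =>
    have h1 : (C (2:ℝ) * X).natDegree ≤ 1 := natDegree_mul_le.trans (by simp)
    refine (natDegree_sub_le _ _).trans (max_le ?_ ?_)
    · calc (C (2:ℝ) * X * HP n).natDegree ≤ (C (2:ℝ) * X).natDegree + (HP n).natDegree :=
        natDegree_mul_le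
      _ ≤ 1 + n := add_le_add h1 ih
      _ = n + 1 := by omega
    · exact (natDegree_derivative_le _).trans (by omega)

lemma HP_deriv (n : ℕ) : derivative (HP (n + 1)) = C (2 * (n + 1) : ℝ) * HP n := by
  induction n with
  | zero => simp [HP]
  | succ n ih =>
    have h : HP (n + 2) = C 2 * X * HP (n + 1) - derivative (HP (n + 1)) := rfl
    rw [h, derivative_sub, derivative_mul, derivative_mul, derivative_C, derivative_X, ih,
      derivative_mul, derivative_C]
    have h2 : HP (n + 1) = C 2 * X * HP n - derivative (HP n) := rfl
    have hc : (C (2 * ((n:ℝ) + 1 + 1)) : Polynomial ℝ) = C 2 + C (2 * ((n:ℝ) + 1)) := by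
      rw [← C_add]; ring_nf
    rw [h2]
    push_cast
    rw [hc]
    ring

lemma HP_iter_deriv (m n : ℕ) (h : m ≤ n) :
    derivative^[m] (HP n) = C ((2 : ℝ) ^ m * (n.descFactorial m : ℝ)) * HP (n - m) := by
  induction m with
  | zero => simp
  | succ m ih =>
    have hmn : m ≤ n := by omega
    rw [Function.iterate_succ_apply', ih hmn, derivative_mul, derivative_C, zero_mul, zero_add]
    have hk : n - m = (n - (m + 1)) + 1 := by omega
    rw [hk, HP_deriv, ← mul_assoc, ← C_mul]
    congr 2
    rw [Nat.descFactorial_succ, hk]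
    push_cast
    ring

lemma gauss_hasDerivAt (p : Polynomial ℝ) (x : ℝ) :
    HasDerivAt (fun t : ℝ => p.eval t * Real.exp (-t ^ 2))
      (((derivative p).eval x - 2 * x * p.eval x) * Real.exp (-x ^ 2)) x := by
  have h2 : HasDerivAt (fun t : ℝ => -t ^ 2) (-(2 * x)) x := by
    refine (hasDerivAt_pow 2 x).neg.congr_deriv ?_
    simp
  have h3 := h2.exp
  have := (p.hasDerivAt x).mul h3
  refine this.congr_deriv ?_
  ring

lemma gauss_iteratedDeriv (n : ℕ) (x : ℝ) :
    iteratedDeriv n (fun s : ℝ => Real.exp (-s ^ 2)) x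
      = (-1 : ℝ) ^ n * ((HP n).eval x * Real.exp (-x ^ 2)) := by
  induction n generalizing x with
  | zero => simp [HP]
  | succ n ih =>
    have ihf : iteratedDeriv n (fun s : ℝ => Real.exp (-s ^ 2))
        = fun x => (-1 : ℝ) ^ n * ((HP n).eval x * Real.exp (-x ^ 2)) := funext ih
    rw [iteratedDeriv_succ, ihf]
    have h1 : HasDerivAt (fun x : ℝ => (-1 : ℝ) ^ n * ((HP n).eval x * Real.exp (-x ^ 2)))
        ((-1 : ℝ) ^ (n + 1) * ((HP (n + 1)).eval x * Real.exp (-x ^ 2))) x := by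
      have := ((gauss_hasDerivAt (HP n) x).const_mul ((-1 : ℝ) ^ n))
      refine this.congr_deriv ?_
      have h2 : HP (n + 1) = C 2 * X * HP n - derivative (HP n) := rfl
      rw [h2]
      simp [pow_succ]
      ring
    exact h1.deriv

lemma integrable_poly_gauss (p : Polynomial ℝ) :
    Integrable (fun t : ℝ => p.eval t * Real.exp (-t ^ 2)) := by
  induction p using Polynomial.induction_on' with
  | add p q hp hq => simpa [add_mul] using (hp.add hq : Integrable (fun t : ℝ => p.eval t * Real.exp (-t ^ 2) + q.eval t * Real.exp (-t ^ 2)))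
  | monomial k a =>
    have h := integrable_rpow_mul_exp_neg_mul_sq (b := 1) one_pos
      (s := (k : ℝ)) (neg_one_lt_zero.trans_le (Nat.cast_nonneg k))
    have h2 : Integrable (fun t : ℝ => t ^ k * Real.exp (-t ^ 2)) := by
      simpa [Real.rpow_natCast] using h
    simpa [mul_assoc] using h2.const_mul a

lemma parts_step (m : ℕ) (p : Polynomial ℝ) :
    ∫ t : ℝ, p.eval t * ((HP (m + 1)).eval t * Real.exp (-t ^ 2))
      = ∫ t : ℝ, (derivative p).eval t * ((HP m).eval t * Real.exp (-t ^ 2)) := by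
  have hu : ∀ x : ℝ, HasDerivAt (fun t : ℝ => p.eval t) ((derivative p).eval x) x :=
    fun x => p.hasDerivAt x
  have hv : ∀ x : ℝ, HasDerivAt (fun t : ℝ => -((HP m).eval t * Real.exp (-t ^ 2)))
      ((HP (m + 1)).eval x * Real.exp (-x ^ 2)) x := by
    intro x
    have h := (gauss_hasDerivAt (HP m) x).neg
    refine h.congr_deriv ?_
    have h2 : HP (m + 1) = C 2 * X * HP m - derivative (HP m) := rfl
    rw [h2]
    simp
    ring
  have huv' : Integrable ((fun t : ℝ => p.eval t) *
      (fun t : ℝ => (HP (m + 1)).eval t * Real.exp (-t ^ 2))) := by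
    have := integrable_poly_gauss (p * HP (m + 1))
    simpa [Pi.mul_def, eval_mul, mul_assoc] using this
  have hgen : ∀ q : Polynomial ℝ, Integrable ((fun t : ℝ => q.eval t) *
      (fun t : ℝ => -((HP m).eval t * Real.exp (-t ^ 2)))) := by
    intro q
    have h0 : Integrable (fun t : ℝ => q.eval t * ((HP m).eval t * Real.exp (-t ^ 2))) := by
      simpa [eval_mul, mul_assoc] using integrable_poly_gauss (q * HP m)
    refine h0.neg.congr (Filter.Eventually.of_forall fun t => ?_)
    simp [Pi.mul_def]
    try ring
  have hu'v := hgen (derivative p)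
  have huv := hgen p
  have key := MeasureTheory.integral_mul_deriv_eq_deriv_mul_of_integrable (fun x _ => hu x) (fun x _ => hv x) huv' hu'v huv
  rw [key, ← MeasureTheory.integral_neg]
  congr 1
  funext t
  ring

lemma parts_iter (m : ℕ) (p : Polynomial ℝ) :
    ∫ t : ℝ, p.eval t * ((HP m).eval t * Real.exp (-t ^ 2))
      = ∫ t : ℝ, (derivative^[m] p).eval t * Real.exp (-t ^ 2) := by
  induction m generalizing p with
  | zero => simp [HP]
  | succ m ih =>
    rw [parts_step m p, ih (derivative p), ← Function.iterate_succ_apply]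

lemma integral_HP_gauss_zero (k : ℕ) (hk : k ≠ 0) :
    ∫ t : ℝ, (HP k).eval t * Real.exp (-t ^ 2) = 0 := by
  have h := parts_iter k 1
  simp only [eval_one, one_mul] at h
  rw [h, Polynomial.iterate_derivative_eq_zero (by simpa using Nat.pos_of_ne_zero hk)]
  simp

lemma integral_HP_mul_HP (n m : ℕ) :
    ∫ t : ℝ, (HP n).eval t * ((HP m).eval t * Real.exp (-t ^ 2))
      = if n = m then (2 : ℝ) ^ n * n.factorial * Real.sqrt Real.pi else 0 := by
  rw [parts_iter m (HP n)]
  rcases lt_trichotomy n m with h | h | h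
  · rw [Polynomial.iterate_derivative_eq_zero ((HP_natDegree_le n).trans_lt h)]
    simp [h.ne]
  · subst h
    rw [HP_iter_deriv n n le_rfl]
    simp only [Nat.sub_self, Nat.descFactorial_self, if_pos rfl]
    have : ∀ t : ℝ, (C ((2:ℝ) ^ n * (n.factorial : ℝ)) * HP 0).eval t * Real.exp (-t ^ 2)
        = ((2:ℝ) ^ n * (n.factorial : ℝ)) * Real.exp (-t ^ 2) := by
      intro t; simp [HP]
    rw [MeasureTheory.integral_congr_ae (Filter.Eventually.of_forall this),
      MeasureTheory.integral_const_mul]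
    have hg : ∫ t : ℝ, Real.exp (-t ^ 2) = Real.sqrt Real.pi := by
      have := integral_gaussian 1
      simpa using this
    rw [hg]
    simp
    try ring_nf
  · rw [HP_iter_deriv m n h.le]
    have : ∀ t : ℝ, (C ((2:ℝ) ^ m * (n.descFactorial m : ℝ)) * HP (n - m)).eval t
        * Real.exp (-t ^ 2)
        = ((2:ℝ) ^ m * (n.descFactorial m : ℝ)) * ((HP (n - m)).eval t * Real.exp (-t ^ 2)) := by
      intro t; simp; ring
    rw [MeasureTheory.integral_congr_ae (Filter.Eventually.of_forall this),
      MeasureTheory.integral_const_mul, integral_HP_gauss_zero (n - m) (by omega)]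
    simp [h.ne']

lemma hermiteH_eq_eval (k : ℕ) (t : ℝ) : hermiteH k t = (HP k).eval t := by
  unfold hermiteH
  rw [gauss_iteratedDeriv]
  have h1 : ((-1 : ℝ)) ^ k * (-1 : ℝ) ^ k = 1 := by
    rw [← pow_add]
    exact Even.neg_one_pow ⟨k, rfl⟩
  have h2 : Real.exp (t ^ 2) * Real.exp (-t ^ 2) = 1 := by
    rw [← Real.exp_add]
    simp
  calc (-1 : ℝ) ^ k * Real.exp (t ^ 2) * ((-1 : ℝ) ^ k * ((HP k).eval t * Real.exp (-t ^ 2)))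
      = ((-1 : ℝ) ^ k * (-1 : ℝ) ^ k) * (Real.exp (t ^ 2) * Real.exp (-t ^ 2))
        * (HP k).eval t := by ring
    _ = (HP k).eval t := by rw [h1, h2]; ring

/-- Orthonormality of the Hermite functions on ℝ. -/
theorem hermiteh_orthonormal (n m : ℕ) :
    ∫ t : ℝ, hermiteh n t * hermiteh m t = if n = m then 1 else 0 := by

  set cn : ℝ := (Real.sqrt (2 ^ n * n.factorial * Real.sqrt Real.pi))⁻¹ with hcn
  set cm : ℝ := (Real.sqrt (2 ^ m * m.factorial * Real.sqrt Real.pi))⁻¹ with hcm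
  have hfun : ∀ t : ℝ, hermiteh n t * hermiteh m t
      = (cn * cm) * ((HP n).eval t * ((HP m).eval t * Real.exp (-t ^ 2))) := by
    intro t
    unfold hermiteh
    rw [hermiteH_eq_eval, hermiteH_eq_eval]
    have he : Real.exp (-t ^ 2 / 2) * Real.exp (-t ^ 2 / 2) = Real.exp (-t ^ 2) := by
      rw [← Real.exp_add]
      ring_nf
    calc cn * (HP n).eval t * Real.exp (-t ^ 2 / 2) * (cm * (HP m).eval t * Real.exp (-t ^ 2 / 2))
        = (cn * cm) * ((HP n).eval t * ((HP m).eval t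
          * (Real.exp (-t ^ 2 / 2) * Real.exp (-t ^ 2 / 2)))) := by ring
      _ = _ := by rw [he]
  rw [MeasureTheory.integral_congr_ae (Filter.Eventually.of_forall hfun),
    MeasureTheory.integral_const_mul, integral_HP_mul_HP]
  by_cases h : n = m
  · subst h
    rw [if_pos rfl, if_pos rfl]
    have hx : (0 : ℝ) < 2 ^ n * n.factorial * Real.sqrt Real.pi := by
      have := Real.sqrt_pos.mpr Real.pi_pos
      positivity
    rw [hcn, ← mul_inv]
    rw [Real.mul_self_sqrt hx.le]
    exact inv_mul_cancel₀ hx.ne'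
  · rw [if_neg h, if_neg h, mul_zero]
end

section
/- Lower bound for Hermite function sums: for every m ≥ 1 and x with |x| ≤ 2√(2m+1), (3m+2)·h_m²(x) + 3m·h_{m−1}²(x) ≥ K_m(x,x), where K_m(x,x) = Σ_{j=0}^m h_j²(x). -/
open Real MeasureTheory Finset

namespace HermiteAux

open Polynomial

lemma derivHe : ∀ n : ℕ, derivative (hermite n) = (n : Polynomial ℤ) * hermite (n - 1) := by
  intro n
  induction n using Nat.twoStepInduction with
  | zero => simp [hermite_zero]
  | one => simp [hermite_one, hermite_zero]
  | more n ih1 ih2 =>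
    rw [hermite_succ (n+1), derivative_sub, derivative_mul, derivative_X, ih2,
      Nat.add_sub_cancel, derivative_mul, ih1]
    have h1 : hermite (n + 1) = X * hermite n - (n : Polynomial ℤ) * hermite (n - 1) := by
      rw [hermite_succ, ih1]
    rw [show n + 2 - 1 = n + 1 from rfl, h1, derivative_natCast]
    push_cast
    ring

lemma hermiteH_eq (n : ℕ) (t : ℝ) :
    hermiteH n t = (Real.sqrt 2) ^ n * aeval (Real.sqrt 2 * t) (hermite n) := by
  have hg : ContDiff ℝ n (fun y : ℝ => Real.exp (-(y ^ 2 / 2))) :=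
    (((contDiff_id.pow 2).div_const 2).neg).exp
  have hfun : (fun s : ℝ => Real.exp (-s ^ 2))
      = fun s : ℝ => (fun y : ℝ => Real.exp (-(y ^ 2 / 2))) (Real.sqrt 2 * s) := by
    funext s
    simp only [mul_pow, Real.sq_sqrt (by norm_num : (2:ℝ) ≥ 0)]
    ring_nf
  have key := iteratedDeriv_comp_const_mul hg (Real.sqrt 2)
  have h2 : iteratedDeriv n (fun s : ℝ => Real.exp (-s ^ 2)) t
      = (Real.sqrt 2) ^ n * iteratedDeriv n (fun y : ℝ => Real.exp (-(y ^ 2 / 2))) (Real.sqrt 2 * t) := by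
    rw [hfun]
    exact congrFun key t
  rw [hermiteH, h2, iteratedDeriv_eq_iterate, deriv_gaussian_eq_hermite_mul_gaussian]
  have h3 : -((Real.sqrt 2 * t) ^ 2 / 2) = -t ^ 2 := by
    rw [mul_pow, Real.sq_sqrt (by norm_num : (2:ℝ) ≥ 0)]; ring
  rw [h3]
  have h4 : Real.exp (t ^ 2) * Real.exp (-t ^ 2) = 1 := by
    rw [← Real.exp_add]; simp
  have h5 : ((-1 : ℝ)) ^ n * (-1 : ℝ) ^ n = 1 := by
    rw [← pow_add]; exact (neg_one_pow_eq_one_iff_even (by norm_num)).mpr (Even.add_self n)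
  linear_combination ((-1:ℝ)^n*(-1:ℝ)^n*√2^n*(aeval (√2*t) (hermite n)))*h4
    + (√2^n*(aeval (√2*t) (hermite n)))*h5

lemma aevalHe_rec (n : ℕ) (y : ℝ) :
    aeval y (hermite (n + 1)) = y * aeval y (hermite n) - n * aeval y (hermite (n - 1)) := by
  rw [hermite_succ, derivHe]
  simp

lemma hermiteH_rec (n : ℕ) (t : ℝ) :
    hermiteH (n + 1) t = 2 * t * hermiteH n t - 2 * n * hermiteH (n - 1) t := by
  rcases n with _ | k
  · simp only [Nat.cast_zero, mul_zero, zero_mul, sub_zero]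
    rw [hermiteH_eq, hermiteH_eq, aevalHe_rec]
    have s2 : Real.sqrt 2 * Real.sqrt 2 = 2 := Real.mul_self_sqrt (by norm_num)
    simp only [Nat.cast_zero, zero_mul, sub_zero, pow_one, pow_zero]
    linear_combination (t * (aeval (√2*t) (hermite 0))) * s2
  · rw [hermiteH_eq, hermiteH_eq, hermiteH_eq, aevalHe_rec]
    have s2 : Real.sqrt 2 * Real.sqrt 2 = 2 := Real.mul_self_sqrt (by norm_num)
    simp only [Nat.add_sub_cancel]
    have hp : (Real.sqrt 2) ^ (k + 2) = 2 * (Real.sqrt 2) ^ k := by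
      rw [pow_succ, pow_succ, mul_assoc, s2]; ring
    rw [hp]
    push_cast
    ring

lemma cpos (n : ℕ) : 0 < (2:ℝ) ^ n * n.factorial * Real.sqrt Real.pi := by
  positivity

lemma sqrtc_rec (n : ℕ) :
    Real.sqrt (2 * ((n:ℝ) + 1)) * (Real.sqrt (2 ^ (n+1) * (n+1).factorial * Real.sqrt Real.pi))⁻¹
      = (Real.sqrt (2 ^ n * n.factorial * Real.sqrt Real.pi))⁻¹ := by
  have h1 : (2:ℝ) ^ (n+1) * (n+1).factorial * Real.sqrt Real.pi
      = (2 ^ n * n.factorial * Real.sqrt Real.pi) * (2 * ((n:ℝ) + 1)) := by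
    rw [Nat.factorial_succ]
    push_cast
    ring
  rw [h1, Real.sqrt_mul (cpos n).le, mul_inv]
  have hne : Real.sqrt (2 * ((n:ℝ) + 1)) ≠ 0 := by positivity
  field_simp

lemma hermiteh_rec (n : ℕ) (t : ℝ) :
    Real.sqrt (2 * ((n:ℝ) + 1)) * hermiteh (n + 1) t
      = 2 * t * hermiteh n t - Real.sqrt (2 * (n:ℝ)) * hermiteh (n - 1) t := by
  rcases n with _ | k
  · simp only [Nat.cast_zero, mul_zero, Real.sqrt_zero, zero_mul, sub_zero, zero_add]
    rw [hermiteh, hermiteh, hermiteH_rec]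
    have A1 := sqrtc_rec 0
    simp only [Nat.cast_zero, zero_add, mul_one] at A1 ⊢
    simp only [Nat.cast_zero, mul_zero, zero_mul, sub_zero]
    linear_combination (2 * t * hermiteH 0 t * Real.exp (-t^2/2)) * A1
  · rw [hermiteh, hermiteh, hermiteh, hermiteH_rec (k+1)]
    have A1 := sqrtc_rec (k + 1)
    have A2 := sqrtc_rec k
    have S : Real.sqrt (2 * ((k:ℝ) + 1)) * Real.sqrt (2 * ((k:ℝ) + 1)) = 2 * ((k:ℝ) + 1) :=
      Real.mul_self_sqrt (by positivity)
    simp only [Nat.add_sub_cancel] at *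
    push_cast at *
    set C2 := (Real.sqrt (2 ^ (k+2) * (k+2).factorial * Real.sqrt Real.pi))⁻¹ with hC2
    set C1 := (Real.sqrt (2 ^ (k+1) * (k+1).factorial * Real.sqrt Real.pi))⁻¹ with hC1
    set C0 := (Real.sqrt (2 ^ k * k.factorial * Real.sqrt Real.pi))⁻¹ with hC0
    set E := Real.exp (-t ^ 2 / 2)
    set H1 := hermiteH (k + 1) t
    set H0 := hermiteH k t
    have A1' : Real.sqrt (2 * ((k:ℝ) + 1 + 1)) * C2 = C1 := by
      convert A1 using 3
    linear_combination ((2 * t * H1 - 2 * ((k:ℝ)+1) * H0) * E) * A1'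
      - (Real.sqrt (2 * ((k:ℝ)+1)) * H0 * E) * A2
      + (C1 * H0 * E) * S


lemma key_identity (x : ℝ) : ∀ m : ℕ, 1 ≤ m →
    ∑ j ∈ Finset.range (m + 1), (hermiteh j x) ^ 2
      = ((m:ℝ) + 1) * (hermiteh m x) ^ 2 + (m:ℝ) * (hermiteh (m - 1) x) ^ 2
        - Real.sqrt (2 * (m:ℝ)) * x * hermiteh m x * hermiteh (m - 1) x := by
  intro m hm
  induction m, hm using Nat.le_induction with
  | base =>
    rw [Finset.sum_range_succ, Finset.sum_range_one]
    have e := hermiteh_rec 0 x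
    simp only [Nat.cast_zero, mul_zero, Real.sqrt_zero, zero_mul, sub_zero, zero_add,
      mul_one, Nat.cast_one] at e ⊢
    have s2 : Real.sqrt 2 * Real.sqrt 2 = 2 := Real.mul_self_sqrt (by norm_num)
    set h0 := hermiteh 0 x
    set h1 := hermiteh 1 x
    have f1 : 2 * h1 ^ 2 = 4 * x ^ 2 * h0 ^ 2 := by
      linear_combination (Real.sqrt 2 * h1 + 2 * x * h0) * e - h1 ^ 2 * s2
    have f2 : Real.sqrt 2 * x * h1 * h0 = 2 * x ^ 2 * h0 ^ 2 := by
      linear_combination (x * h0) * e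
    norm_num [show (1:ℕ) - 1 = 0 from rfl]
    linear_combination f2 - f1 / 2
  | succ n hn ih =>
    rw [Finset.sum_range_succ, ih]
    have hrec := hermiteh_rec n x
    have hn1 : n - 1 + 1 = n := Nat.succ_pred_eq_of_pos hn
    have S1 : Real.sqrt (2 * ((n:ℝ) + 1)) * Real.sqrt (2 * ((n:ℝ) + 1)) = 2 * ((n:ℝ) + 1) :=
      Real.mul_self_sqrt (by positivity)
    have sb : Real.sqrt (2 * (n:ℝ)) * Real.sqrt (2 * (n:ℝ)) = 2 * (n:ℝ) :=
      Real.mul_self_sqrt (by positivity)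
    set A := hermiteh (n + 1) x
    set hm := hermiteh n x
    set hm1 := hermiteh (n - 1) x
    have eq1 : 2 * ((n:ℝ) + 1) * A ^ 2
        = (2 * x * hm - Real.sqrt (2 * (n:ℝ)) * hm1) ^ 2 := by
      linear_combination (Real.sqrt (2 * ((n:ℝ) + 1)) * A
        + (2 * x * hm - Real.sqrt (2 * (n:ℝ)) * hm1)) * hrec - A ^ 2 * S1
    have eq2 : Real.sqrt (2 * ((n:ℝ) + 1)) * x * A * hm
        = x * hm * (2 * x * hm - Real.sqrt (2 * (n:ℝ)) * hm1) := by
      linear_combination (x * hm) * hrec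
    simp only [Nat.add_sub_cancel]
    push_cast
    linear_combination - eq1 / 2 + eq2 - hm1 ^ 2 / 2 * sb

end HermiteAux

/-- Lower bound for Hermite function sums:
`(3m+2)h_m²(x) + 3m·h_{m-1}²(x) ≥ K_m(x,x)` for `|x| ≤ 2√(2m+1)`. -/
theorem hermiteh_lower_bound (m : ℕ) (hm : 1 ≤ m) (x : ℝ)
    (hx : |x| ≤ 2 * Real.sqrt (2 * (m : ℝ) + 1)) :
    ∑ j ∈ Finset.range (m + 1), (hermiteh j x) ^ 2
      ≤ (3 * (m : ℝ) + 2) * (hermiteh m x) ^ 2 + 3 * (m : ℝ) * (hermiteh (m - 1) x) ^ 2 := by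
  rw [HermiteAux.key_identity x m hm]
  set A := hermiteh m x
  set B := hermiteh (m - 1) x
  set b := Real.sqrt (2 * (m:ℝ)) with hbdef
  set u := Real.sqrt (2 * (m:ℝ) + 1) with hudef
  have hb : 0 ≤ b := Real.sqrt_nonneg _
  have hu : 0 ≤ u := Real.sqrt_nonneg _
  have hb2 : b * b = 2 * (m:ℝ) := Real.mul_self_sqrt (by positivity)
  have hu2 : u * u = 2 * (m:ℝ) + 1 := Real.mul_self_sqrt (by positivity)
  -- it suffices: - b * x * A * B ≤ (2m+1)A² + 2m B²
  have h1 : -(x * A * B) ≤ |x| * |A| * |B| := by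
    calc -(x * A * B) ≤ |x * A * B| := neg_le_abs _
    _ = |x| * |A| * |B| := by rw [abs_mul, abs_mul]
  have h2 : |x| * |A| * |B| ≤ (2 * u) * (|A| * |B|) := by
    have : (0:ℝ) ≤ |A| * |B| := by positivity
    calc |x| * |A| * |B| = |x| * (|A| * |B|) := by ring
    _ ≤ (2 * u) * (|A| * |B|) := by
        apply mul_le_mul_of_nonneg_right _ this
        simpa [hudef] using hx
  have h3 : b * (2 * u * (|A| * |B|)) ≤ (2 * (m:ℝ) + 1) * A ^ 2 + 2 * (m:ℝ) * B ^ 2 := by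
    nlinarith [sq_nonneg (u * |A| - b * |B|), sq_abs A, sq_abs B, abs_nonneg A, abs_nonneg B]
  have h4 : b * (-(x * A * B)) ≤ b * (2 * u * (|A| * |B|)) :=
    mul_le_mul_of_nonneg_left (h1.trans h2) hb
  nlinarith [h3, h4]
end

section
/- Dimension reduction identity for diagonal Hermite kernels: for all k ≥ 2 and d ≥ 3 and x ∈ ℝ^d, 𝓗_{k,d}(x,x) − 𝓗_{k−2,d}(x,x) = π^{−1} 𝓗_{k,d−2}(x',x'), where x' ∈ ℝ^{d−2} is any point with |x'| = |x| (the diagonal kernel 𝓗_{k,d}(x,x) depends on x only through |x|). -/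
open Real MeasureTheory Finset

/-- The diagonal Hermite kernel `𝓗_{k,d}(x,x) = Σ_{|α|=k} 𝓗_α(x)²`. -/
noncomputable def hermiteKerDiag (d k : ℕ) (x : Fin d → ℝ) : ℝ :=
  ∑ α ∈ Finset.Nat.antidiagonalTuple d k, (hermiteHd d α x) ^ 2

namespace HermiteAux

section PolyPart
open Polynomial

/-- Physicists' Hermite polynomials, defined recursively. -/
noncomputable def Hp : ℕ → Polynomial ℝ
  | 0 => 1
  | n + 1 => C 2 * X * Hp n - derivative (Hp n)

theorem derivative_Hp : ∀ n : ℕ, derivative (Hp (n + 1)) = C (2 * (n + 1) : ℝ) * Hp n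
  | 0 => by simp [Hp]
  | n + 1 => by
    have h1 : Hp (n + 2) = C 2 * X * Hp (n + 1) - derivative (Hp (n + 1)) := rfl
    have h2 := derivative_Hp n
    rw [h1, derivative_sub, derivative_mul, h2, derivative_mul, derivative_C, derivative_X,
      derivative_mul, derivative_C]
    have h3 : Hp (n + 1) = C 2 * X * Hp n - derivative (Hp n) := rfl
    rw [show derivative (Hp n) = C 2 * X * Hp n - Hp (n+1) by rw [h3]; ring]
    push_cast
    rw [show (2 * ((n:ℝ) + 1 + 1)) = 2 + 2 * ((n:ℝ) + 1) by ring, C_add]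
    ring

theorem Hp_succ_succ (n : ℕ) :
    Hp (n + 2) = C 2 * X * Hp (n + 1) - C (2 * (n + 1) : ℝ) * Hp n := by
  rw [show Hp (n + 2) = C 2 * X * Hp (n + 1) - derivative (Hp (n + 1)) from rfl, derivative_Hp n]

theorem iteratedDeriv_gauss (n : ℕ) :
    (iteratedDeriv n (fun s => Real.exp (-s ^ 2)))
      = fun t => (-1 : ℝ) ^ n * (Hp n).eval t * Real.exp (-t ^ 2) := by
  induction n with
  | zero => simp [Hp]
  | succ n ih =>
    rw [iteratedDeriv_succ, ih]
    funext t
    have h1 : HasDerivAt (fun t : ℝ => (-1 : ℝ) ^ n * (Hp n).eval t * Real.exp (-t ^ 2))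
        ((-1 : ℝ) ^ n * ((derivative (Hp n)).eval t * Real.exp (-t ^ 2)
          + (Hp n).eval t * (Real.exp (-t ^ 2) * (-(2 * t))))) t := by
      have hexp : HasDerivAt (fun t : ℝ => Real.exp (-t ^ 2)) (Real.exp (-t ^ 2) * (-(2 * t))) t := by
        have : HasDerivAt (fun t : ℝ => -t ^ 2) (-(2 * t)) t := by
          simpa using ((hasDerivAt_pow 2 t).fun_neg)
        exact (Real.hasDerivAt_exp _).comp t this
      have hpoly : HasDerivAt (fun t : ℝ => (Hp n).eval t) ((derivative (Hp n)).eval t) t :=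
        (Hp n).hasDerivAt t
      simpa [mul_assoc, mul_add, mul_comm, mul_left_comm] using
        ((hpoly.mul hexp).const_mul ((-1 : ℝ) ^ n))
    rw [h1.deriv]
    have : (Hp (n + 1)).eval t = 2 * t * (Hp n).eval t - (derivative (Hp n)).eval t := by
      rw [show Hp (n + 1) = C 2 * X * Hp n - derivative (Hp n) from rfl]; simp
    rw [this]
    ring

theorem hermiteH_eq_eval (n : ℕ) (t : ℝ) : hermiteH n t = (Hp n).eval t := by
  rw [hermiteH, iteratedDeriv_gauss]
  have h1 : ((-1 : ℝ) ^ n) * ((-1 : ℝ) ^ n) = 1 := by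
    rw [← pow_add]
    exact (neg_one_pow_eq_one_iff_even (by norm_num)).2 (Even.add_self n)
  have h2 : Real.exp (t ^ 2) * Real.exp (-t ^ 2) = 1 := by
    rw [← Real.exp_add]; simp
  calc (-1 : ℝ) ^ n * Real.exp (t ^ 2) * ((-1) ^ n * eval t (Hp n) * Real.exp (-t ^ 2))
      = (((-1 : ℝ) ^ n) * ((-1 : ℝ) ^ n)) * (Real.exp (t ^ 2) * Real.exp (-t ^ 2))
        * eval t (Hp n) := by ring
    _ = eval t (Hp n) := by rw [h1, h2]; ring

lemma eval_Hp0 (t : ℝ) : Polynomial.eval t (Hp 0) = 1 := by simp [Hp]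

lemma eval_Hp1 (t : ℝ) : Polynomial.eval t (Hp 1) = 2*t := by
  show Polynomial.eval t ((Polynomial.C 2 : Polynomial ℝ) * Polynomial.X * Hp 0 - derivative (Hp 0)) = 2*t
  simp [Hp]

lemma eval_Hp2 (t : ℝ) : Polynomial.eval t (Hp 2) = 4*t^2 - 2 := by
  rw [Hp_succ_succ]
  simp [eval_Hp1, eval_Hp0]; ring

lemma eval_Hp3 (t : ℝ) : Polynomial.eval t (Hp 3) = 8*t^3 - 12*t := by
  rw [Hp_succ_succ]
  simp [eval_Hp2, eval_Hp1]; ring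

end PolyPart

section PSPart


open PowerSeries

noncomputable def a (t : ℝ) (n : ℕ) : ℝ := (Polynomial.eval t (Hp n))^2 / (2^n * n.factorial)

noncomputable def A (t : ℝ) : ℝ⟦X⟧ := PowerSeries.mk (a t)

noncomputable def Dop : ℝ⟦X⟧ := 1 + PowerSeries.X - PowerSeries.X^2 - PowerSeries.X^3

noncomputable def Ntot (m S : ℝ) : ℝ⟦X⟧ :=
  PowerSeries.C (2*S) + PowerSeries.C (m - 2*S) * PowerSeries.X + PowerSeries.C m * PowerSeries.X^2

lemma coeff_Dop_mul (y : ℝ⟦X⟧) (n : ℕ) :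
    coeff n (Dop * y) = coeff n y + (if 1 ≤ n then coeff (n-1) y else 0)
      - (if 2 ≤ n then coeff (n-2) y else 0) - (if 3 ≤ n then coeff (n-3) y else 0) := by
  have h : Dop * y = y + PowerSeries.X^1*y - PowerSeries.X^2*y - PowerSeries.X^3*y := by rw [Dop]; ring
  rw [h]
  simp only [map_sub, map_add, PowerSeries.coeff_X_pow_mul']

lemma coeff_Ntot_mul (m S : ℝ) (y : ℝ⟦X⟧) (n : ℕ) :
    coeff n (Ntot m S * y) = 2*S * coeff n y
      + (if 1 ≤ n then (m - 2*S) * coeff (n-1) y else 0)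
      + (if 2 ≤ n then m * coeff (n-2) y else 0) := by
  have h : Ntot m S * y = PowerSeries.C (2*S) * y + PowerSeries.C (m - 2*S) * (PowerSeries.X^1*y)
      + PowerSeries.C m * (PowerSeries.X^2*y) := by rw [Ntot]; ring
  rw [h]
  simp only [map_add, PowerSeries.coeff_C_mul, PowerSeries.coeff_X_pow_mul', mul_ite, mul_zero]

theorem ode_A (t : ℝ) : Dop * d⁄dX ℝ (A t) = Ntot 1 (t^2) * A t := by
  ext n
  rw [coeff_Dop_mul, coeff_Ntot_mul]
  have ca : ∀ m : ℕ, coeff m (A t) = a t m := fun m => coeff_mk m _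
  have cd : ∀ m : ℕ, coeff m (d⁄dX ℝ (A t)) = a t (m+1) * (m+1) := by
    intro m; rw [PowerSeries.coeff_derivative, ca]
  match n with
  | 0 =>
    simp only [cd, ca]
    norm_num
    rw [a, a, eval_Hp0, eval_Hp1]
    norm_num [Nat.factorial]
    ring
  | 1 =>
    simp only [cd, ca]
    norm_num
    rw [a, a, a, eval_Hp0, eval_Hp1, eval_Hp2]
    norm_num [Nat.factorial]
    ring
  | 2 =>
    simp only [cd, ca]
    norm_num
    rw [a, a, a, a, eval_Hp0, eval_Hp1, eval_Hp2, eval_Hp3]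
    norm_num [Nat.factorial]
    ring
  | (n+3) =>
    simp only [cd, ca]
    have h1 : (1:ℕ) ≤ n + 3 := by omega
    have h2 : (2:ℕ) ≤ n + 3 := by omega
    have h3 : (3:ℕ) ≤ n + 3 := by omega
    rw [if_pos h1, if_pos h2, if_pos h3, if_pos h1, if_pos h2]
    have e1 : n + 3 - 1 = n + 2 := by omega
    have e2 : n + 3 - 2 = n + 1 := by omega
    have e3 : n + 3 - 3 = n := by omega
    rw [e1, e2, e3]
    -- now a pure identity about `a`
    have r3 : Polynomial.eval t (Hp (n+3)) = 2*t*Polynomial.eval t (Hp (n+2))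
        - 2*((n:ℝ)+2)*Polynomial.eval t (Hp (n+1)) := by
      rw [Hp_succ_succ (n+1)]
      simp only [Polynomial.eval_sub, Polynomial.eval_mul, Polynomial.eval_C, Polynomial.eval_X]
      push_cast; ring
    have r4 : Polynomial.eval t (Hp (n+4)) = 2*t*Polynomial.eval t (Hp (n+3))
        - 2*((n:ℝ)+3)*Polynomial.eval t (Hp (n+2)) := by
      rw [Hp_succ_succ (n+2)]
      simp only [Polynomial.eval_sub, Polynomial.eval_mul, Polynomial.eval_C, Polynomial.eval_X]
      push_cast; ring
    simp only [a, r4, r3]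
    have f1 : ((n+1).factorial : ℝ) = ((n:ℝ)+1) * n.factorial := by
      push_cast [Nat.factorial_succ]; ring
    have f2 : ((n+2).factorial : ℝ) = ((n:ℝ)+2) * ((n:ℝ)+1) * n.factorial := by
      push_cast [Nat.factorial_succ]; ring
    have f3 : ((n+3).factorial : ℝ) = ((n:ℝ)+3) * ((n:ℝ)+2) * ((n:ℝ)+1) * n.factorial := by
      push_cast [Nat.factorial_succ]; ring
    have f4 : ((n+4).factorial : ℝ) = ((n:ℝ)+4) * ((n:ℝ)+3) * ((n:ℝ)+2) * ((n:ℝ)+1) * n.factorial := by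
      push_cast [Nat.factorial_succ]; ring
    have p1 : ((2:ℝ)^(n+1)) = 2 * 2^n := by ring
    have p2 : ((2:ℝ)^(n+2)) = 4 * 2^n := by ring
    have p3 : ((2:ℝ)^(n+3)) = 8 * 2^n := by ring
    have p4 : ((2:ℝ)^(n+4)) = 16 * 2^n := by ring
    rw [f1, f2, f3, f4, p1, p2, p3, p4]
    have hfac : (n.factorial : ℝ) ≠ 0 := Nat.cast_ne_zero.2 n.factorial_ne_zero
    have hpow : ((2:ℝ)^n) ≠ 0 := by positivity
    have h0 : ((n:ℝ)+1) ≠ 0 := by positivity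
    have hb : ((n:ℝ)+2) ≠ 0 := by positivity
    have hc : ((n:ℝ)+3) ≠ 0 := by positivity
    have hd : ((n:ℝ)+4) ≠ 0 := by positivity
    push_cast
    field_simp
    ring

lemma Ntot_add (m S m' S' : ℝ) : Ntot m S + Ntot m' S' = Ntot (m+m') (S+S') := by
  simp only [Ntot]
  rw [show (C (2*(S+S')) : ℝ⟦X⟧) = C (2*S) + C (2*S') by rw [← map_add]; ring_nf,
    show (C (m+m'-2*(S+S')) : ℝ⟦X⟧) = C (m-2*S) + C (m'-2*S') by rw [← map_add]; ring_nf,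
    show (C (m+m') : ℝ⟦X⟧) = C m + C m' by rw [← map_add]]
  ring

lemma Ntot_zero : Ntot 0 0 = 0 := by simp [Ntot]

lemma ode_mul {f g P Q : ℝ⟦X⟧} (hf : Dop * d⁄dX ℝ f = P * f) (hg : Dop * d⁄dX ℝ g = Q * g) :
    Dop * d⁄dX ℝ (f * g) = (P + Q) * (f * g) := by
  have h := Derivation.leibniz (d⁄dX ℝ) f g
  rw [smul_eq_mul, smul_eq_mul] at h
  rw [h]
  calc Dop * (f * d⁄dX ℝ g + g * d⁄dX ℝ f)
      = f * (Dop * d⁄dX ℝ g) + g * (Dop * d⁄dX ℝ f) := by ring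
    _ = f * (Q * g) + g * (P * f) := by rw [hf, hg]
    _ = (P + Q) * (f * g) := by ring

lemma ode_prod {ι : Type*} (s : Finset ι) (c : ι → ℝ) (f : ι → ℝ⟦X⟧)
    (h : ∀ i ∈ s, Dop * d⁄dX ℝ (f i) = Ntot 1 (c i) * f i) :
    Dop * d⁄dX ℝ (∏ i ∈ s, f i) = Ntot s.card (∑ i ∈ s, c i) * ∏ i ∈ s, f i := by
  classical
  induction s using Finset.induction_on with
  | empty => simp [Ntot_zero]
  | @insert x s' hx ih =>
    rw [Finset.prod_insert hx, Finset.sum_insert hx, Finset.card_insert_of_notMem hx]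
    have h1 := h x (Finset.mem_insert_self x s')
    have h2 := ih (fun i hi => h i (Finset.mem_insert_of_mem hi))
    have := ode_mul h1 h2
    rw [Ntot_add] at this
    rw [this]
    congr 2
    push_cast
    ring

lemma ode_unique {P y z : ℝ⟦X⟧} (hy : Dop * d⁄dX ℝ y = P * y) (hz : Dop * d⁄dX ℝ z = P * z)
    (h0 : coeff 0 y = coeff 0 z) : y = z := by
  have key : ∀ w : ℝ⟦X⟧, Dop * d⁄dX ℝ w = P * w → ∀ n : ℕ,
      coeff n (d⁄dX ℝ w) = coeff n (P * w)
        - coeff n (PowerSeries.X * ((1 - PowerSeries.X - PowerSeries.X^2) * d⁄dX ℝ w)) := by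
    intro w hw n
    have hD : Dop * d⁄dX ℝ w = d⁄dX ℝ w
        + PowerSeries.X * ((1 - PowerSeries.X - PowerSeries.X^2) * d⁄dX ℝ w) := by
      rw [Dop]; ring
    have := congrArg (coeff n) (hD.symm.trans hw)
    rw [map_add] at this
    linarith [this]
  ext n
  induction n using Nat.strong_induction_on with
  | _ n ih =>
    match n with
    | 0 => exact h0
    | (n+1) =>
      have hy' := key y hy n
      have hz' := key z hz n
      rw [PowerSeries.coeff_derivative] at hy' hz'
      have e1 : coeff n (P * y) = coeff n (P * z) := by
        rw [PowerSeries.coeff_mul, PowerSeries.coeff_mul]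
        apply Finset.sum_congr rfl
        intro p hp
        rw [Finset.HasAntidiagonal.mem_antidiagonal] at hp
        rw [ih p.2 (by omega)]
      have e2 : coeff n (PowerSeries.X * ((1 - PowerSeries.X - PowerSeries.X^2) * d⁄dX ℝ y))
          = coeff n (PowerSeries.X * ((1 - PowerSeries.X - PowerSeries.X^2) * d⁄dX ℝ z)) := by
        match n with
        | 0 => rw [PowerSeries.coeff_zero_X_mul, PowerSeries.coeff_zero_X_mul]
        | (m+1) =>
          rw [PowerSeries.coeff_succ_X_mul, PowerSeries.coeff_succ_X_mul,
            PowerSeries.coeff_mul, PowerSeries.coeff_mul]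
          apply Finset.sum_congr rfl
          intro p hp
          rw [Finset.HasAntidiagonal.mem_antidiagonal] at hp
          rw [PowerSeries.coeff_derivative, PowerSeries.coeff_derivative,
            ih (p.2+1) (by omega)]
      have hpos : ((n:ℝ) + 1) ≠ 0 := by positivity
      have : coeff (n+1) y * ((n:ℝ)+1) = coeff (n+1) z * ((n:ℝ)+1) := by
        rw [hy', hz', e1, e2]
      exact mul_right_cancel₀ hpos this

lemma sum_antidiagonalTuple_succ {M : Type*} [AddCommMonoid M] (d k : ℕ)
    (f : (Fin (d+1) → ℕ) → M) :
    ∑ α ∈ Finset.Nat.antidiagonalTuple (d+1) k, f α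
      = ∑ p ∈ Finset.HasAntidiagonal.antidiagonal k, ∑ β ∈ Finset.Nat.antidiagonalTuple d p.2,
          f (Fin.cons p.1 β) := by
  rw [Finset.sum_sigma']
  refine Finset.sum_nbij'
    (fun α => (⟨(α 0, ∑ i, Fin.tail α i), Fin.tail α⟩ : Σ _p : ℕ × ℕ, (Fin d → ℕ)))
    (fun q => Fin.cons q.1.1 q.2) ?_ ?_ ?_ ?_ ?_
  · intro α hα
    rw [Finset.Nat.mem_antidiagonalTuple] at hα
    rw [Finset.mem_sigma, Finset.HasAntidiagonal.mem_antidiagonal, Finset.Nat.mem_antidiagonalTuple]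
    refine ⟨?_, rfl⟩
    rw [← hα, Fin.sum_univ_succ]
    rfl
  · intro q hq
    rw [Finset.mem_sigma] at hq
    obtain ⟨h1, h2⟩ := hq
    rw [Finset.HasAntidiagonal.mem_antidiagonal] at h1
    rw [Finset.Nat.mem_antidiagonalTuple] at h2 ⊢
    rw [Fin.sum_cons, h2, h1]
  · intro α hα
    simp [Fin.cons_self_tail]
  · intro q hq
    rw [Finset.mem_sigma] at hq
    obtain ⟨h1, h2⟩ := hq
    rw [Finset.Nat.mem_antidiagonalTuple] at h2
    refine Sigma.ext ?_ (heq_of_eq ?_)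
    · simp only [Fin.cons_zero, Fin.tail_cons]
      rw [h2]
    · simp [Fin.tail_cons]
  · intro α hα
    rw [Fin.cons_self_tail]

lemma coeff_prod_mk (d k : ℕ) (g : Fin d → ℕ → ℝ) :
    coeff k (∏ j, PowerSeries.mk (g j))
      = ∑ α ∈ Finset.Nat.antidiagonalTuple d k, ∏ j, g j (α j) := by
  induction d generalizing k with
  | zero =>
    simp only [Finset.univ_eq_empty, Finset.prod_empty]
    match k with
    | 0 => simp [Finset.Nat.antidiagonalTuple_zero_zero]
    | (k+1) => simp [Finset.Nat.antidiagonalTuple_zero_succ, PowerSeries.coeff_one]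
  | succ d ih =>
    rw [Fin.prod_univ_succ, PowerSeries.coeff_mul, sum_antidiagonalTuple_succ]
    apply Finset.sum_congr rfl
    intro p hp
    rw [PowerSeries.coeff_mk, ih p.2 (fun j => g j.succ), Finset.mul_sum]
    apply Finset.sum_congr rfl
    intro β hβ
    rw [Fin.prod_univ_succ]
    simp [Fin.cons_zero, Fin.cons_succ]

/-- the normalized squared-Hermite antidiagonal sum -/
noncomputable def Q (d k : ℕ) (x : Fin d → ℝ) : ℝ :=
  ∑ α ∈ Finset.Nat.antidiagonalTuple d k, ∏ j, a (x j) (α j)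

lemma a_zero (t : ℝ) : a t 0 = 1 := by
  simp [a, eval_Hp0, Nat.factorial]

lemma Q_eq_coeff (d k : ℕ) (x : Fin d → ℝ) : Q d k x = coeff k (∏ j, A (x j)) := by
  simp only [A, Q]
  rw [coeff_prod_mk d k (fun j => a (x j))]

lemma ode_M (d : ℕ) (x : Fin d → ℝ) :
    Dop * d⁄dX ℝ (∏ j, A (x j)) = Ntot d (∑ j, (x j)^2) * ∏ j, A (x j) := by
  have h := ode_prod Finset.univ (fun j => (x j)^2) (fun j => A (x j))
    (fun i _ => ode_A (x i))
  rw [Finset.card_univ, Fintype.card_fin] at h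
  exact h

lemma constcoeff_M (d : ℕ) (x : Fin d → ℝ) : coeff 0 (∏ j, A (x j)) = 1 := by
  rw [← Q_eq_coeff, Q]
  rw [Finset.Nat.antidiagonalTuple_zero_right]
  simp [a_zero]

lemma C_two : (PowerSeries.C) (2:ℝ) = 2 :=
  map_ofNat (PowerSeries.C (R := ℝ)) 2

lemma dimension_reduction_PS (e : ℕ) (x : Fin (e+2) → ℝ) (x' : Fin e → ℝ)
    (hxx : ∑ i, (x' i) ^ 2 = ∑ i, (x i) ^ 2) :
    (1 - PowerSeries.X^2) * ∏ j, A (x j) = ∏ j, A (x' j) := by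
  set S := ∑ j, (x j)^2 with hS
  have hM : Dop * d⁄dX ℝ (∏ j, A (x j)) = Ntot (e+2) S * ∏ j, A (x j) := by
    have := ode_M (e+2) x; push_cast at this ⊢; exact this
  have hM' : Dop * d⁄dX ℝ (∏ j, A (x' j)) = Ntot e S * ∏ j, A (x' j) := by
    have := ode_M e x'; rw [hxx] at this; exact this
  have hder : d⁄dX ℝ ((1 - PowerSeries.X^2) * ∏ j, A (x j))
      = (1 - PowerSeries.X^2) * d⁄dX ℝ (∏ j, A (x j))
        - 2 * PowerSeries.X * ∏ j, A (x j) := by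
    rw [Derivation.leibniz]
    have h2 : d⁄dX ℝ ((1 : ℝ⟦X⟧) - PowerSeries.X^2) = -(2 * PowerSeries.X) := by
      rw [map_sub, pow_two, Derivation.leibniz]
      simp [smul_eq_mul]
      ring
    rw [h2, smul_eq_mul, smul_eq_mul]
    ring
  have hkey : (1 - PowerSeries.X^2) * Ntot (e+2) S
      = Ntot e S * (1 - PowerSeries.X^2) + 2 * PowerSeries.X * Dop := by
    have : Ntot ((e:ℝ)+2) S = Ntot e S + Ntot 2 0 := by
      rw [Ntot_add]; norm_num
    rw [this]
    have h20 : Ntot 2 0 = 2 * PowerSeries.X + 2 * PowerSeries.X^2 := by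
      rw [Ntot]
      norm_num [C_two]
    rw [h20, Dop]
    ring
  apply ode_unique (P := Ntot e S)
  · rw [hder, mul_sub]
    calc Dop * ((1 - PowerSeries.X ^ 2) * d⁄dX ℝ (∏ j, A (x j)))
        - Dop * (2 * PowerSeries.X * ∏ j, A (x j))
        = (1 - PowerSeries.X ^ 2) * (Dop * d⁄dX ℝ (∏ j, A (x j)))
          - 2 * PowerSeries.X * Dop * (∏ j, A (x j)) := by ring
      _ = ((1 - PowerSeries.X ^ 2) * Ntot (e+2) S - 2 * PowerSeries.X * Dop)
            * (∏ j, A (x j)) := by rw [hM]; ring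
      _ = Ntot e S * ((1 - PowerSeries.X ^ 2) * ∏ j, A (x j)) := by rw [hkey]; ring
  · exact hM'
  · have cM := constcoeff_M (e+2) x
    have cM' := constcoeff_M e x'
    rw [PowerSeries.coeff_zero_eq_constantCoeff] at cM cM' ⊢
    rw [map_mul, cM, cM']
    simp

lemma Q_reduction (e m : ℕ) (x : Fin (e+2) → ℝ) (x' : Fin e → ℝ)
    (hxx : ∑ i, (x' i) ^ 2 = ∑ i, (x i) ^ 2) :
    Q (e+2) (m+2) x - Q (e+2) m x = Q e (m+2) x' := by
  have h := dimension_reduction_PS e x x' hxx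
  have := congrArg (coeff (m+2)) h
  rw [sub_mul, one_mul, map_sub] at this
  rw [show ((m:ℕ)+2) = m + 2 from rfl] at this
  rw [PowerSeries.coeff_X_pow_mul _ 2 m] at this
  rw [Q_eq_coeff, Q_eq_coeff, Q_eq_coeff]
  exact this

end PSPart

section FinalPart

open Polynomial

lemma hermiteh_sq (n : ℕ) (t : ℝ) :
    hermiteh n t ^ 2 = (Real.sqrt Real.pi)⁻¹ * Real.exp (-t^2) * a t n := by
  rw [hermiteh, hermiteH_eq_eval]
  have hnn : (0:ℝ) ≤ 2 ^ n * n.factorial * Real.sqrt Real.pi := by positivity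
  have h1 : ((Real.sqrt (2 ^ n * n.factorial * Real.sqrt Real.pi))⁻¹)^2
      = (2 ^ n * (n.factorial:ℝ) * Real.sqrt Real.pi)⁻¹ := by
    rw [inv_pow, Real.sq_sqrt hnn]
  have h2 : Real.exp (-t ^ 2 / 2) ^ 2 = Real.exp (-t^2) := by
    rw [← Real.exp_nat_mul]
    norm_num
    ring_nf
  calc ((Real.sqrt (2 ^ n * n.factorial * Real.sqrt Real.pi))⁻¹ * Polynomial.eval t (Hp n)
        * Real.exp (-t ^ 2 / 2)) ^ 2
      = ((Real.sqrt (2 ^ n * n.factorial * Real.sqrt Real.pi))⁻¹)^2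
        * (Polynomial.eval t (Hp n))^2 * Real.exp (-t ^ 2 / 2) ^ 2 := by ring
    _ = (2 ^ n * (n.factorial:ℝ) * Real.sqrt Real.pi)⁻¹ * (Polynomial.eval t (Hp n))^2
        * Real.exp (-t^2) := by rw [h1, h2]
    _ = (Real.sqrt Real.pi)⁻¹ * Real.exp (-t^2) * a t n := by
        rw [a]
        have hf : ((2:ℝ) ^ n * (n.factorial:ℝ)) ≠ 0 := by positivity
        field_simp

lemma hermiteKerDiag_eq (d k : ℕ) (x : Fin d → ℝ) :
    hermiteKerDiag d k x
      = ((Real.sqrt Real.pi)^d)⁻¹ * Real.exp (-∑ j, (x j)^2) * Q d k x := by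
  rw [hermiteKerDiag, Q, Finset.mul_sum]
  apply Finset.sum_congr rfl
  intro α hα
  rw [hermiteHd, ← Finset.prod_pow]
  have : ∀ j : Fin d, hermiteh (α j) (x j) ^ 2
      = (Real.sqrt Real.pi)⁻¹ * Real.exp (-(x j)^2) * a (x j) (α j) :=
    fun j => hermiteh_sq (α j) (x j)
  rw [Finset.prod_congr rfl (fun j _ => this j)]
  rw [Finset.prod_mul_distrib, Finset.prod_mul_distrib]
  rw [Finset.prod_const, ← Real.exp_sum]
  rw [Finset.card_univ, Fintype.card_fin, ← inv_pow]
  congr 2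
  · rw [← Finset.sum_neg_distrib]

end FinalPart

end HermiteAux

/-- Dimension reduction identity for diagonal Hermite kernels:
`𝓗_{k,d}(x,x) - 𝓗_{k-2,d}(x,x) = π⁻¹ 𝓗_{k,d-2}(x',x')` whenever `|x'| = |x|`. -/
theorem hermiteKerDiag_dimension_reduction (k d : ℕ) (hk : 2 ≤ k) (hd : 3 ≤ d)
    (x : Fin d → ℝ) (x' : Fin (d - 2) → ℝ)
    (hxx : ∑ i, (x' i) ^ 2 = ∑ i, (x i) ^ 2) :
    hermiteKerDiag d k x - hermiteKerDiag d (k - 2) x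
      = Real.pi⁻¹ * hermiteKerDiag (d - 2) k x' := by
  obtain ⟨e, rfl⟩ : ∃ e, d = e + 2 := ⟨d - 2, by omega⟩
  obtain ⟨m, rfl⟩ : ∃ m, k = m + 2 := ⟨k - 2, by omega⟩
  have hd2 : e + 2 - 2 = e := by omega
  have hk2 : m + 2 - 2 = m := by omega
  rw [hk2]
  -- x' : Fin (e + 2 - 2) → ℝ; identify with Fin e
  have hx' : ∑ i, (x' i) ^ 2 = ∑ i, (x i)^2 := hxx
  have hQ : HermiteAux.Q (e+2) (m+2) x - HermiteAux.Q (e+2) m x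
      = HermiteAux.Q e (m+2) x' := HermiteAux.Q_reduction e m x x' hxx
  have hE : ∑ i : Fin e, (x' i) ^ 2 = ∑ i, (x i)^2 := hxx
  rw [show hermiteKerDiag (e+2-2) (m+2) x' = hermiteKerDiag e (m+2) x' from rfl]
  rw [HermiteAux.hermiteKerDiag_eq, HermiteAux.hermiteKerDiag_eq,
    HermiteAux.hermiteKerDiag_eq e (m+2) x']
  rw [hE, ← hQ]
  have hpi : ((Real.sqrt Real.pi)^(e+2))⁻¹
      = Real.pi⁻¹ * ((Real.sqrt Real.pi)^e)⁻¹ := by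
    rw [pow_add, Real.sq_sqrt Real.pi_nonneg, mul_inv]
    ring
  rw [hpi]
  ring
end
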